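/- Let w be a random vector in ℝᵐ with E[w] = 0 and E[w wᵀ] ≤ S (Loewner order) for a known positive semidefinite matrix S. Let a ∈ ℝᵐ, b ∈ ℝ, and p ∈ (0,1). If b ≤ 1 - √(p/(1-p))·‖S^{1/2} a‖₂, then for every such distribution of w, P(aᵀ w + b ≤ 1) ≥ p. -/

import Mathlib

open MeasureTheory Matrix
section
open scoped ComplexOrder
noncomputable def Matrix.PosSemidef.sqrt {n 𝕜 : Type*} [Fintype n] [RCLike 𝕜] [DecidableEq n]
    {A : Matrix n n 𝕜} (hA : A.PosSemidef) : Matrix n n 𝕜 :=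
  hA.1.eigenvectorUnitary.1 * diagonal ((↑) ∘ (√·) ∘ hA.1.eigenvalues) *
    (star hA.1.eigenvectorUnitary : Matrix n n 𝕜)
end
section
open scoped ComplexOrder
theorem Matrix.PosSemidef.sqrt_isHermitian' {n 𝕜 : Type*} [Fintype n] [RCLike 𝕜] [DecidableEq n]
    {A : Matrix n n 𝕜} (hA : A.PosSemidef) : hA.sqrt.IsHermitian := by
  unfold Matrix.PosSemidef.sqrt
  rw [IsHermitian, conjTranspose_mul, conjTranspose_mul, diagonal_conjTranspose,
    ← star_eq_conjTranspose, ← star_eq_conjTranspose, star_star, Matrix.mul_assoc]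
  congr 3
  funext i
  simp
theorem Matrix.PosSemidef.sqrt_mul_self' {n 𝕜 : Type*} [Fintype n] [RCLike 𝕜] [DecidableEq n]
    {A : Matrix n n 𝕜} (hA : A.PosSemidef) : hA.sqrt * hA.sqrt = A := by
  unfold Matrix.PosSemidef.sqrt
  conv_rhs => rw [hA.1.spectral_theorem, Unitary.conjStarAlgAut_apply]
  have hU : (star hA.1.eigenvectorUnitary : Matrix n n 𝕜) * hA.1.eigenvectorUnitary.1 = 1 :=
    Unitary.coe_star_mul_self _
  rw [Matrix.mul_assoc, Matrix.mul_assoc, ← Matrix.mul_assoc _ _ (star _ : Matrix n n 𝕜),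
    ← Matrix.mul_assoc (star _ : Matrix n n 𝕜), hU, Matrix.one_mul,
    ← Matrix.mul_assoc (diagonal _) (diagonal _), diagonal_mul_diagonal, ← Matrix.mul_assoc]
  congr 3
  funext i
  simp only [Function.comp_apply, ← RCLike.ofReal_mul, Real.mul_self_sqrt (hA.eigenvalues_nonneg i)]
end

/-- distributionally robust SOC chance-constraint tightening: if E[w] = 0,
E[wwᵀ] ≤ S and b ≤ 1 - √(p/(1-p))·‖S^{1/2}a‖₂, then P(aᵀw + b ≤ 1) ≥ p. -/
theorem stmt11 {Ω : Type*} [MeasureSpace Ω] (μ : Measure Ω) [IsProbabilityMeasure μ]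
    {m : ℕ} (w : Ω → Fin m → ℝ) (hmeas : Measurable w)
    (hint1 : ∀ i, Integrable (fun ω => w ω i) μ)
    (hint2 : ∀ i j, Integrable (fun ω => w ω i * w ω j) μ)
    (hmean : ∀ i, ∫ ω, w ω i ∂μ = 0)
    (S : Matrix (Fin m) (Fin m) ℝ) (hS : S.PosSemidef)
    (hmom : (S - Matrix.of fun i j => ∫ ω, w ω i * w ω j ∂μ).PosSemidef)
    (a : Fin m → ℝ) (b p : ℝ) (hp : p ∈ Set.Ioo (0 : ℝ) 1)
    (hsoc : b ≤ 1 - Real.sqrt (p / (1 - p)) *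
      Real.sqrt ((hS.sqrt *ᵥ a) ⬝ᵥ (hS.sqrt *ᵥ a))) :
    ENNReal.ofReal p ≤ μ {ω | a ⬝ᵥ w ω + b ≤ 1} := by
  obtain ⟨hp0, hp1⟩ := hp
  have hp1' : 0 < 1 - p := by linarith
  set M : Matrix (Fin m) (Fin m) ℝ := Matrix.of fun i j => ∫ ω, w ω i * w ω j ∂μ with hMdef
  set X : Ω → ℝ := fun ω => a ⬝ᵥ w ω with hXdef
  have hXeq : ∀ ω, X ω = ∑ i, a i * w ω i := fun ω => rfl
  have hwi : ∀ i, Measurable fun ω => w ω i := fun i => (measurable_pi_apply i).comp hmeas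
  have hXmeas : Measurable X := by
    simp only [hXdef, dotProduct]
    exact Finset.measurable_sum _ fun i _ => (measurable_const.mul (hwi i))
  have hXint : Integrable X μ := by
    have := integrable_finset_sum (μ := μ) Finset.univ
      (fun i (_ : i ∈ Finset.univ) => ((hint1 i).const_mul (a i)))
    simpa [hXdef, dotProduct] using this
  have hXmean : ∫ ω, X ω ∂μ = 0 := by
    have h1 : ∫ ω, X ω ∂μ = ∑ i, ∫ ω, a i * w ω i ∂μ := by
      simp only [hXeq]
      exact integral_finset_sum _ fun i _ => (hint1 i).const_mul (a i)
    simp [h1, integral_const_mul, hmean]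
  have hsq : ∀ ω, X ω ^ 2 = ∑ i, ∑ j, a i * a j * (w ω i * w ω j) := by
    intro ω
    rw [hXeq, sq, Finset.sum_mul_sum]
    exact Finset.sum_congr rfl fun i _ => Finset.sum_congr rfl fun j _ => by ring
  have hX2int : Integrable (fun ω => X ω ^ 2) μ := by
    simp only [hsq]
    exact integrable_finset_sum _ fun i _ => integrable_finset_sum _
      fun j _ => (hint2 i j).const_mul _
  have hX2 : ∫ ω, X ω ^ 2 ∂μ = ∑ i, ∑ j, a i * a j * M i j := by
    simp only [hsq]
    rw [integral_finset_sum _ (fun i _ => integrable_finset_sum _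
      fun j _ => (hint2 i j).const_mul _)]
    refine Finset.sum_congr rfl fun i _ => ?_
    rw [integral_finset_sum _ (fun j _ => (hint2 i j).const_mul _)]
    exact Finset.sum_congr rfl fun j _ => integral_const_mul _ _
  have hMa : a ⬝ᵥ (M *ᵥ a) = ∑ i, ∑ j, a i * a j * M i j := by
    simp only [dotProduct, mulVec, Finset.mul_sum]
    exact Finset.sum_congr rfl fun i _ => Finset.sum_congr rfl fun j _ => by ring
  set σ2 : ℝ := a ⬝ᵥ (S *ᵥ a) with hσ2def
  have hσnn : 0 ≤ σ2 := by simpa using hS.dotProduct_mulVec_nonneg a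
  have hbound : ∫ ω, X ω ^ 2 ∂μ ≤ σ2 := by
    have h0 := hmom.dotProduct_mulVec_nonneg a
    simp only [sub_mulVec, dotProduct_sub, star_trivial] at h0
    rw [hX2, ← hMa]
    linarith
  have hsqrt_eq : (hS.sqrt *ᵥ a) ⬝ᵥ (hS.sqrt *ᵥ a) = σ2 := by
    have hsym : hS.sqrtᵀ = hS.sqrt := by
      rw [← conjTranspose_eq_transpose_of_trivial, hS.sqrt_isHermitian']
    rw [hσ2def]
    conv_rhs => rw [← hS.sqrt_mul_self']
    rw [← mulVec_mulVec, dotProduct_mulVec a, ← hsym, vecMul_transpose, hsym]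
  set t : ℝ := 1 - b with htdef
  have hsoc' : Real.sqrt (p / (1 - p)) * Real.sqrt σ2 ≤ t := by
    rw [hsqrt_eq] at hsoc; linarith
  have htnn : 0 ≤ t := le_trans (by positivity) hsoc'
  set E : Set Ω := {ω | a ⬝ᵥ w ω + b ≤ 1} with hEdef
  have hEmeas : MeasurableSet E := by
    have : E = {ω | X ω + b ≤ 1} := rfl
    rw [this]
    exact measurableSet_le (hXmeas.add_const b) measurable_const
  have hEc : Eᶜ = {ω | t < X ω} := by
    ext ω
    simp only [hEdef, Set.mem_compl_iff, Set.mem_setOf_eq, not_le, htdef]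
    rw [show X ω = a ⬝ᵥ w ω from rfl]
    constructor <;> intro h <;> linarith
  -- reduce to a real inequality on the complement
  apply ENNReal.ofReal_le_of_le_toReal
  have hcompl : (μ Eᶜ).toReal = 1 - (μ E).toReal := by
    rw [prob_compl_eq_one_sub hEmeas, ENNReal.toReal_sub_of_le prob_le_one (by simp)]
    simp
  suffices hkey : (μ Eᶜ).toReal ≤ 1 - p by linarith [hcompl]
  rcases le_or_gt σ2 0 with hσ0 | hσpos
  · -- degenerate case : X = 0 a.e.
    have hz : ∫ ω, X ω ^ 2 ∂μ = 0 :=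
      le_antisymm (le_trans hbound hσ0) (integral_nonneg fun ω => sq_nonneg _)
    have hae : ∀ᵐ ω ∂μ, X ω ^ 2 = 0 := by
      have := (integral_eq_zero_iff_of_nonneg (fun ω => sq_nonneg (X ω)) hX2int).mp hz
      filter_upwards [this] with ω hω using hω
    have hmem : ∀ᵐ ω ∂μ, ω ∈ E := by
      filter_upwards [hae] with ω hω
      have hX0 : X ω = 0 := by nlinarith [sq_nonneg (X ω)]
      show a ⬝ᵥ w ω + b ≤ 1
      have : a ⬝ᵥ w ω = 0 := hX0
      rw [this]
      linarith [htnn]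
    have : μ Eᶜ = 0 := by
      exact ae_iff.mp hmem
    simp [this]
    linarith
  · -- main case via Markov on (X + u)^2
    have htpos : 0 < t := lt_of_lt_of_le (by positivity) hsoc'
    set u : ℝ := σ2 / t with hudef
    have hupos : 0 < u := div_pos hσpos htpos
    have hfint : Integrable (fun ω => (X ω + u) ^ 2) μ := by
      have : (fun ω => (X ω + u) ^ 2)
          = fun ω => X ω ^ 2 + (2 * u) * X ω + u ^ 2 := funext fun ω => by ring
      rw [this]
      exact (hX2int.add (hXint.const_mul (2 * u))).add (integrable_const _)
    have hfval : ∫ ω, (X ω + u) ^ 2 ∂μ ≤ σ2 + u ^ 2 := by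
      have h1 : ∫ ω, (X ω + u) ^ 2 ∂μ
          = ∫ ω, X ω ^ 2 ∂μ + (2 * u) * ∫ ω, X ω ∂μ + u ^ 2 := by
        have he : (fun ω => (X ω + u) ^ 2)
            = fun ω => X ω ^ 2 + (2 * u * X ω + u ^ 2) := funext fun ω => by ring
        have hg1 : Integrable (fun ω => 2 * u * X ω) μ := hXint.const_mul _
        have hg2 : Integrable (fun ω => 2 * u * X ω + u ^ 2) μ :=
          hg1.add (integrable_const _)
        rw [he, integral_add hX2int hg2, integral_add hg1 (integrable_const _),
          integral_const_mul, integral_const]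
        simp
        ring
      rw [h1, hXmean]
      simpa using hbound
    have hmark := mul_meas_ge_le_integral_of_nonneg
      (ae_of_all μ fun ω => sq_nonneg (X ω + u)) hfint ((t + u) ^ 2)
    have hsub : Eᶜ ⊆ {ω | (t + u) ^ 2 ≤ (X ω + u) ^ 2} := by
      rw [hEc]
      intro ω hω
      simp only [Set.mem_setOf_eq] at hω ⊢
      have h1 : t + u ≤ X ω + u := by linarith
      exact pow_le_pow_left₀ (by positivity) h1 2
    have hmono : (μ Eᶜ).toReal ≤ (μ {ω | (t + u) ^ 2 ≤ (X ω + u) ^ 2}).toReal :=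
      ENNReal.toReal_mono (measure_ne_top μ _) (measure_mono hsub)
    have htu : 0 < (t + u) ^ 2 := by positivity
    have hstep : (μ Eᶜ).toReal ≤ (σ2 + u ^ 2) / (t + u) ^ 2 := by
      rw [le_div_iff₀ htu]
      calc (μ Eᶜ).toReal * (t + u) ^ 2
          ≤ (μ {ω | (t + u) ^ 2 ≤ (X ω + u) ^ 2}).toReal * (t + u) ^ 2 :=
            mul_le_mul_of_nonneg_right hmono (le_of_lt htu)
        _ = (t + u) ^ 2 * (μ {ω | (t + u) ^ 2 ≤ (X ω + u) ^ 2}).toReal := mul_comm _ _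
        _ ≤ ∫ ω, (X ω + u) ^ 2 ∂μ := hmark
        _ ≤ σ2 + u ^ 2 := hfval
    have heq : (σ2 + u ^ 2) / (t + u) ^ 2 = σ2 / (σ2 + t ^ 2) := by
      rw [hudef]
      field_simp
      ring
    have hfinal : σ2 / (σ2 + t ^ 2) ≤ 1 - p := by
      have hsq' : p / (1 - p) * σ2 ≤ t ^ 2 := by
        have h2 := mul_le_mul hsoc' hsoc' (by positivity) (le_trans (by positivity) hsoc')
        calc p / (1 - p) * σ2
            = (Real.sqrt (p / (1 - p)) * Real.sqrt σ2) *
              (Real.sqrt (p / (1 - p)) * Real.sqrt σ2) := by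
              rw [show ∀ x1 x2 y1 y2 : ℝ, (x1*y1)*(x2*y2) = (x1*x2)*(y1*y2) from fun _ _ _ _ => by ring,
                Real.mul_self_sqrt (by positivity), Real.mul_self_sqrt hσnn]
          _ ≤ t * t := h2
          _ = t ^ 2 := (sq t).symm
      rw [div_le_iff₀ (by positivity)]
      have : p * σ2 ≤ (1 - p) * t ^ 2 := by
        have := mul_le_mul_of_nonneg_left hsq' (le_of_lt hp1')
        calc p * σ2 = (1 - p) * (p / (1 - p) * σ2) := by field_simp
          _ ≤ (1 - p) * t ^ 2 := this
      nlinarith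
    linarith [hstep, heq, hfinal]
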